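/- If a polygonal 2-tree has at least two chordless cycles, then it has a leaf polygon: a chordless cycle P such that exactly one edge of P is also an edge of some other chordless cycle. -/

import Mathlib

open SimpleGraph

/-- The graph obtained from `G` by adding a path of `m` new vertices `w_0, …, w_{m-1}`
together with the edges `{u, w_0}`, `{w_i, w_{i+1}}` for `i + 1 < m`, and `{w_{m-1}, v}`,
thereby creating a new cycle of length `m + 2` through the edge `{u, v}`. -/
def SimpleGraph.pathExtend {V : Type} (G : SimpleGraph V) (u v : V) (m : ℕ) :
    SimpleGraph (V ⊕ Fin m) :=
  SimpleGraph.fromRel (fun a b =>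
    (∃ x y : V, a = Sum.inl x ∧ b = Sum.inl y ∧ G.Adj x y) ∨
    (∃ i : Fin m, a = Sum.inl u ∧ b = Sum.inr i ∧ i.val = 0) ∨
    (∃ i j : Fin m, a = Sum.inr i ∧ b = Sum.inr j ∧ j.val = i.val + 1) ∨
    (∃ i : Fin m, a = Sum.inr i ∧ b = Sum.inl v ∧ i.val = m - 1))

/-- A polygonal 2-tree: any cycle graph on `k ≥ 3` vertices is a polygonal 2-tree, and
any graph obtained from a polygonal 2-tree by adding a path of `m ≥ 1` new vertices
whose ends are joined to the two endpoints of an existing edge (creating a new cycle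
of length `m + 2` through that edge) is again a polygonal 2-tree (up to isomorphism). -/
inductive SimpleGraph.IsPolygonal2Tree : {V : Type} → SimpleGraph V → Prop
  | cycle {V : Type} {G : SimpleGraph V} {k : ℕ} (hk : 3 ≤ k)
      (iso : Nonempty (G ≃g SimpleGraph.cycleGraph k)) : G.IsPolygonal2Tree
  | extend {V : Type} {G : SimpleGraph V} {u v : V} (huv : G.Adj u v)
      {m : ℕ} (hm : 1 ≤ m) {W : Type} {H : SimpleGraph W}
      (iso : Nonempty (H ≃g G.pathExtend u v m)) :
      G.IsPolygonal2Tree → H.IsPolygonal2Tree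

/-- A chordless cycle of `G`, identified with its vertex set `s`: the subgraph of `G`
induced on `s` is a cycle graph on at least three vertices (so in particular no two
non-consecutive vertices of the cycle are adjacent in `G`). -/
def SimpleGraph.IsChordlessCycle {V : Type} (G : SimpleGraph V) (s : Set V) : Prop :=
  3 ≤ Nat.card s ∧ Nonempty (G.induce s ≃g SimpleGraph.cycleGraph (Nat.card s))

section AuxLeafPolygon

variable {V W : Type} {G : SimpleGraph V} {H : SimpleGraph W}

/-- Embedding induces iso of induced subgraphs. -/
noncomputable def embInduceIso (f : G ↪g H) (s : Set V) :
    G.induce s ≃g H.induce (f '' s) where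
  toEquiv := Equiv.Set.image f s f.injective
  map_rel_iff' := by
    intro a b
    simp [Equiv.Set.image, Equiv.Set.imageOfInjOn, f.map_adj_iff]

lemma IsChordlessCycle.map (f : G ↪g H) {s : Set V} (hs : G.IsChordlessCycle s) :
    H.IsChordlessCycle (f '' s) := by
  obtain ⟨h3, ⟨e⟩⟩ := hs
  have hcard : Nat.card (f '' s) = Nat.card s := Nat.card_image_of_injective f.injective s
  refine ⟨by omega, ⟨?_⟩⟩
  rw [hcard]
  exact ((embInduceIso f s).symm.trans e)
variable {V : Type} {G : SimpleGraph V}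

open Fin.CommRing in
lemma cyc_nbr {k : ℕ} (w : Fin (k + 3)) :
    (cycleGraph (k + 3)).Adj w (w + 1) ∧ (cycleGraph (k + 3)).Adj w (w - 1) ∧ w + 1 ≠ w - 1 := by
  have h1 : (cycleGraph (k + 1 + 2)).Adj w (w + 1) :=
    cycleGraph_adj.mpr (Or.inr (by ring))
  have h2 : (cycleGraph (k + 1 + 2)).Adj w (w - 1) :=
    cycleGraph_adj.mpr (Or.inl (by ring))
  refine ⟨h1, h2, fun h => ?_⟩
  have h2 : (2 : Fin (k+3)) = 0 := by linear_combination h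
  have := congrArg Fin.val h2
  simp [Fin.ext_iff, Fin.val_two] at this
  rw [Nat.mod_eq_of_lt (by omega)] at this
  omega

lemma induceAdj {s : Set V} {a b : s} : (G.induce s).Adj a b ↔ G.Adj a b := Iff.rfl

lemma chordless_nbrs {s : Set V} (hs : G.IsChordlessCycle s) {x : V} (hx : x ∈ s) :
    ∃ y z, y ∈ s ∧ z ∈ s ∧ y ≠ z ∧ G.Adj x y ∧ G.Adj x z ∧
      ∀ w ∈ s, G.Adj x w → w = y ∨ w = z := by
  obtain ⟨h3, ⟨e⟩⟩ := hs
  obtain ⟨k, hk⟩ : ∃ k, Nat.card s = k + 3 := ⟨Nat.card s - 3, by omega⟩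
  rw [hk] at e
  set a : Fin (k + 3) := e ⟨x, hx⟩ with ha
  obtain ⟨hA1, hA2, hne⟩ := cyc_nbr a
  refine ⟨e.symm (a + 1), e.symm (a - 1), (e.symm (a + 1)).2, (e.symm (a - 1)).2,
    fun h => hne (by rwa [Subtype.val_inj, e.symm.injective.eq_iff] at h), ?_, ?_, ?_⟩
  · have : (G.induce s).Adj ⟨x, hx⟩ (e.symm (a + 1)) := by
      rw [← e.map_adj_iff]; simpa using hA1
    exact this
  · have : (G.induce s).Adj ⟨x, hx⟩ (e.symm (a - 1)) := by
      rw [← e.map_adj_iff]; simpa using hA2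
    exact this
  · intro w hw hadj
    have hadj' : (G.induce s).Adj ⟨x, hx⟩ ⟨w, hw⟩ := hadj
    rw [← e.map_adj_iff] at hadj'
    have hmem : e ⟨w, hw⟩ ∈ ({a - 1, a + 1} : Set (Fin (k + 3))) := by
      have h' : e ⟨w, hw⟩ ∈ (cycleGraph (k + 1 + 2)).neighborSet a := hadj'
      rwa [cycleGraph_neighborSet] at h'
    rcases hmem with h | h
    · right; exact congrArg Subtype.val (by simpa using congrArg e.symm h)
    · left
      have h' : e ⟨w, hw⟩ = a + 1 := by simpa using h
      exact congrArg Subtype.val (by simpa using congrArg e.symm h')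

lemma chordless_closure {s : Set V} (hs : G.IsChordlessCycle s) {T : Set V} {x0 : V}
    (hx0s : x0 ∈ s) (hx0 : x0 ∈ T)
    (hcl : ∀ x ∈ T, x ∈ s → ∀ y ∈ s, G.Adj x y → y ∈ T) : s ⊆ T := by
  obtain ⟨h3, ⟨e⟩⟩ := hs
  have hpre : (G.induce s).Preconnected := by
    have h1 : (cycleGraph (Nat.card s)).Preconnected := cycleGraph_preconnected
    exact Preconnected.map e.symm.toHom e.symm.toEquiv.surjective h1
  intro y hy
  obtain ⟨p⟩ := hpre ⟨x0, hx0s⟩ ⟨y, hy⟩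
  have key : ∀ (a b : s) (p : (G.induce s).Walk a b), (a : V) ∈ T → (b : V) ∈ T := by
    intro a b p
    induction p with
    | nil => exact id
    | cons h q ih =>
      intro ha
      exact ih (hcl _ ha (Subtype.coe_prop _) _ (Subtype.coe_prop _) h)
  exact key _ _ p hx0

lemma chordless_nonempty {s : Set V} (hs : G.IsChordlessCycle s) : s.Nonempty := by
  rcases s.eq_empty_or_nonempty with rfl | h
  · have := hs.1; simp [Nat.card_eq_fintype_card] at this
  · exact h

lemma cyc_chordless_eq_univ {k : ℕ} (hk : 3 ≤ k) {s : Set (Fin k)}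
    (hs : (cycleGraph k).IsChordlessCycle s) : s = Set.univ := by
  obtain ⟨k', rfl⟩ : ∃ k', k = k' + 3 := ⟨k - 3, by omega⟩
  obtain ⟨x0, hx0⟩ := chordless_nonempty hs
  have closed : ∀ x ∈ s, ∀ y, (cycleGraph (k' + 3)).Adj x y → y ∈ s := by
    intro x hx y hadj
    obtain ⟨y', z', hy', hz', hne, hay, haz, -⟩ := chordless_nbrs hs hx
    have hset : ∀ w, (cycleGraph (k' + 3)).Adj x w → w ∈ ({x - 1, x + 1} : Set (Fin (k' + 3))) := by
      intro w hw
      have : w ∈ (cycleGraph (k' + 1 + 2)).neighborSet x := hw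
      rwa [cycleGraph_neighborSet] at this
    have h1 := hset _ hay
    have h2 := hset _ haz
    have h3 := hset _ hadj
    simp only [Set.mem_insert_iff, Set.mem_singleton_iff] at h1 h2 h3
    rcases h3 with rfl | rfl
    · rcases h1 with rfl | rfl
      · exact hy'
      · rcases h2 with rfl | rfl
        · exact hz'
        · exact absurd rfl hne
    · rcases h1 with rfl | rfl
      · rcases h2 with rfl | rfl
        · exact absurd rfl hne
        · exact hz'
      · exact hy'
  ext y
  simp only [Set.mem_univ, iff_true]
  obtain ⟨p⟩ := (cycleGraph_preconnected (n := k' + 3)) x0 y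
  clear hs
  induction p with
  | nil => exact hx0
  | cons h q ih => exact ih (closed _ hx0 _ h)

lemma pe_adj_inl_inl {u v : V} {m : ℕ} {x y : V} :
    (G.pathExtend u v m).Adj (Sum.inl x) (Sum.inl y) ↔ G.Adj x y := by
  constructor
  · rintro ⟨hne, h | h⟩ <;>
      rcases h with ⟨x', y', hx, hy, h⟩ | ⟨i, hx, hy, h⟩ | ⟨i, j, hx, hy, h⟩ | ⟨i, hx, hy, h⟩ <;>
      simp_all <;> subst_vars <;> first | exact h | exact h.symm
  · intro h
    exact ⟨by simpa using h.ne, Or.inl (Or.inl ⟨x, y, rfl, rfl, h⟩)⟩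

def nbrA (u : V) (m : ℕ) (i : Fin m) : V ⊕ Fin m :=
  if i.val = 0 then Sum.inl u else Sum.inr ⟨i.val - 1, Nat.lt_of_le_of_lt (Nat.sub_le _ _) i.isLt⟩

def nbrB (v : V) (m : ℕ) (i : Fin m) : V ⊕ Fin m :=
  if h : i.val = m - 1 then Sum.inl v else Sum.inr ⟨i.val + 1, by have := i.isLt; omega⟩

lemma nbrA_ne_nbrB {u v : V} (huv : u ≠ v) {m : ℕ} (i : Fin m) :
    nbrA u m i ≠ nbrB v m i := by
  unfold nbrA nbrB
  have := i.isLt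
  split_ifs with h1 h2 h2 <;> simp [Fin.ext_iff, huv] <;> omega

lemma pe_adj_inr {u v : V} {m : ℕ} (i : Fin m) (b : V ⊕ Fin m) :
    (G.pathExtend u v m).Adj (Sum.inr i) b ↔ b = nbrA u m i ∨ b = nbrB v m i := by
  have him := i.isLt
  constructor
  · rintro ⟨hne, h | h⟩
    · obtain ⟨x', y', hx, hy, hxy⟩ | ⟨j, hx, hy, hj⟩ | ⟨j, j', hx, hy, hj⟩ | ⟨j, hx, hy, hj⟩ := h
      · exact nomatch hx
      · exact nomatch hx
      · injection hx with hij; subst hij; subst hy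
        right
        have hne' : ¬ i.val = m - 1 := by have := j'.isLt; omega
        simp [nbrB, hne', Fin.ext_iff, hj]
      · injection hx with hij; subst hij; subst hy
        right; simp [nbrB, hj]
    · obtain ⟨x', y', hx, hy, hxy⟩ | ⟨j, hx, hy, hj⟩ | ⟨j, j', hx, hy, hj⟩ | ⟨j, hx, hy, hj⟩ := h
      · exact nomatch hy
      · injection hy with hij; subst hij; subst hx
        left; simp [nbrA, hj]
      · injection hy with hij; subst hij; subst hx
        left
        have hne' : ¬ i.val = 0 := by omega
        simp only [nbrA, hne', if_false, Sum.inr.injEq, Fin.ext_iff]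
        omega
      · exact nomatch hy
  · intro h
    rcases h with rfl | rfl
    · unfold nbrA
      split_ifs with h0
      · exact ⟨by simp, Or.inr (Or.inr (Or.inl ⟨i, rfl, rfl, h0⟩))⟩
      · refine ⟨by simp [Fin.ext_iff]; omega, Or.inr (Or.inr (Or.inr (Or.inl ?_)))⟩
        exact ⟨⟨i.val - 1, Nat.lt_of_le_of_lt (Nat.sub_le _ _) i.isLt⟩, i, rfl, rfl, by simp; omega⟩
    · unfold nbrB
      split_ifs with h0
      · exact ⟨by simp, Or.inl (Or.inr (Or.inr (Or.inr ⟨i, rfl, rfl, h0⟩)))⟩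
      · refine ⟨by simp [Fin.ext_iff], Or.inl (Or.inr (Or.inr (Or.inl ?_)))⟩
        exact ⟨i, ⟨i.val + 1, by omega⟩, rfl, rfl, rfl⟩

lemma fin_sub_val {n : ℕ} (x y : Fin (n + 2)) :
    (x - y).val = if y.val ≤ x.val then x.val - y.val else x.val + (n + 2) - y.val := by
  have hx := x.isLt; have hy := y.isLt
  rw [Fin.sub_def]
  show (n + 2 - y.val + x.val) % (n + 2) = _
  split_ifs with h
  · have e : n + 2 - y.val + x.val = (n + 2) + (x.val - y.val) := by omega
    rw [e, Nat.add_mod_left, Nat.mod_eq_of_lt (by omega)]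
  · have e : n + 2 - y.val + x.val = x.val + (n + 2) - y.val := by omega
    rw [e, Nat.mod_eq_of_lt (by omega)]

lemma cyc_adj_val {n : ℕ} (a b : Fin (n + 2)) :
    (cycleGraph (n + 2)).Adj a b ↔
      (a.val + 1 = b.val ∨ b.val + 1 = a.val ∨ (a.val = 0 ∧ b.val = n + 1) ∨
        (b.val = 0 ∧ a.val = n + 1)) := by
  have ha := a.isLt; have hb := b.isLt
  rw [cycleGraph_adj', fin_sub_val, fin_sub_val]
  split_ifs <;> constructor <;> intro h <;> omega

def polySet (u v : V) (m : ℕ) : Set (V ⊕ Fin m) :=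
  {Sum.inl u, Sum.inl v} ∪ Set.range Sum.inr

lemma mem_polySet_inl {u v w : V} {m : ℕ} :
    Sum.inl w ∈ polySet u v m ↔ w = u ∨ w = v := by simp [polySet]

lemma mem_polySet_inr {u v : V} {m : ℕ} (i : Fin m) :
    Sum.inr i ∈ polySet u v m := by simp [polySet]

open scoped Classical in
noncomputable def polyEquiv (u v : V) (huv : u ≠ v) (m : ℕ) : polySet u v m ≃ Fin (m + 2) where
  toFun x := Sum.elim (fun w => if w = u then (⟨0, by omega⟩ : Fin (m + 2)) else ⟨m + 1, by omega⟩)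
    (fun i => ⟨i.val + 1, by have := i.isLt; omega⟩) x.val
  invFun j :=
    if h : j.val = 0 then ⟨Sum.inl u, by simp [polySet]⟩
    else if h2 : j.val = m + 1 then ⟨Sum.inl v, by simp [polySet]⟩
    else ⟨Sum.inr ⟨j.val - 1, by have := j.isLt; omega⟩, by simp [polySet]⟩
  left_inv := by
    rintro ⟨a, ha⟩
    rcases a with w | i
    · rcases mem_polySet_inl.mp ha with rfl | rfl
      · simp
      · rw [Subtype.ext_iff]
        simp [if_neg (Ne.symm huv)]
    · have hi := i.isLt
      rw [Subtype.ext_iff]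
      simp only [Sum.elim_inr]
      have e1 : ¬ (i.val + 1 = 0) := by omega
      have e2 : ¬ (i.val + 1 = m + 1) := by omega
      have e3 : ¬ (i.val = m) := by omega
      simp [e1, e2, e3]
  right_inv := by
    intro j
    have hj := j.isLt
    beta_reduce
    by_cases h : j.val = 0
    · rw [dif_pos h]; simp [Fin.ext_iff, h.symm]
    · by_cases h2 : j.val = m + 1
      · rw [dif_neg h, dif_pos h2]
        simp [if_neg (Ne.symm huv), Fin.ext_iff, h2.symm]
      · rw [dif_neg h, dif_neg h2]
        simp [Fin.ext_iff]; omega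

lemma nbrA_eq_inl {u w : V} {m : ℕ} (i : Fin m) :
    (Sum.inl w = nbrA u m i) ↔ (w = u ∧ i.val = 0) := by
  unfold nbrA; split_ifs with h <;> simp [h]

lemma nbrB_eq_inl {v w : V} {m : ℕ} (i : Fin m) :
    (Sum.inl w = nbrB v m i) ↔ (w = v ∧ i.val = m - 1) := by
  unfold nbrB; split_ifs with h <;> simp [h]

lemma nbrA_eq_inr {u : V} {m : ℕ} (i j : Fin m) :
    (Sum.inr j = nbrA u m i) ↔ (¬ i.val = 0 ∧ j.val = i.val - 1) := by
  unfold nbrA; split_ifs with h <;> simp [h, Fin.ext_iff]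

lemma nbrB_eq_inr {v : V} {m : ℕ} (i j : Fin m) :
    (Sum.inr j = nbrB v m i) ↔ (¬ i.val = m - 1 ∧ j.val = i.val + 1) := by
  unfold nbrB; split_ifs with h <;> simp [h, Fin.ext_iff]

open scoped Classical in
lemma polyEquiv_val_inl {u v x : V} (huv : u ≠ v) {m : ℕ} (h : Sum.inl x ∈ polySet u v m) :
    ((polyEquiv u v huv m) ⟨Sum.inl x, h⟩).val = if x = u then 0 else m + 1 := by
  show (Sum.elim (fun w => if w = u then (⟨0, by omega⟩ : Fin (m + 2)) else ⟨m + 1, by omega⟩)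
    (fun i : Fin m => ⟨i.val + 1, by have := i.isLt; omega⟩) (Sum.inl x)).val = _
  rw [Sum.elim_inl, apply_ite Fin.val]

lemma polyEquiv_val_inr {u v : V} (huv : u ≠ v) {m : ℕ} (i : Fin m)
    (h : Sum.inr i ∈ polySet u v m) :
    ((polyEquiv u v huv m) ⟨Sum.inr i, h⟩).val = i.val + 1 := rfl

noncomputable def polyIso {u v : V} (huv : G.Adj u v) (m : ℕ) :
    ((G.pathExtend u v m).induce (polySet u v m)) ≃g cycleGraph (m + 2) where
  toEquiv := polyEquiv u v huv.ne m
  map_rel_iff' := by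
    rintro ⟨a, ha⟩ ⟨b, hb⟩
    show (cycleGraph (m + 2)).Adj _ _ ↔ (G.pathExtend u v m).Adj a b
    rw [cyc_adj_val]
    rcases a with x | i
    · have hxa := mem_polySet_inl.mp ha
      rcases b with y | j
      · have hyb := mem_polySet_inl.mp hb
        rw [polyEquiv_val_inl huv.ne, polyEquiv_val_inl huv.ne, pe_adj_inl_inl]
        rcases hxa with hx | hx <;> rcases hyb with hy | hy
        · rw [if_pos hx, if_pos hy]
          exact iff_of_false (by omega) (by rw [hx, hy]; exact G.irrefl)
        · rw [if_pos hx, if_neg (by rw [hy]; exact Ne.symm huv.ne)]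
          exact iff_of_true (by omega) (by rw [hx, hy]; exact huv)
        · rw [if_neg (by rw [hx]; exact Ne.symm huv.ne), if_pos hy]
          exact iff_of_true (by omega) (by rw [hx, hy]; exact huv.symm)
        · rw [if_neg (by rw [hx]; exact Ne.symm huv.ne),
            if_neg (by rw [hy]; exact Ne.symm huv.ne)]
          exact iff_of_false (by omega) (by rw [hx, hy]; exact G.irrefl)
      · have hj := j.isLt
        rw [polyEquiv_val_inl huv.ne, polyEquiv_val_inr huv.ne,
          (G.pathExtend u v m).adj_comm, pe_adj_inr, nbrA_eq_inl, nbrB_eq_inl]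
        rcases hxa with hx | hx
        · rw [if_pos hx]
          constructor
          · intro hh; exact Or.inl ⟨hx, by omega⟩
          · rintro (⟨-, hj'⟩ | ⟨hxv, hj'⟩)
            · omega
            · exact absurd (hx.symm.trans hxv) huv.ne
        · rw [if_neg (by rw [hx]; exact Ne.symm huv.ne)]
          constructor
          · intro hh; exact Or.inr ⟨hx, by omega⟩
          · rintro (⟨hxu, hj'⟩ | ⟨-, hj'⟩)
            · exact absurd (hx.symm.trans hxu) (Ne.symm huv.ne)
            · omega
    · have hi := i.isLt
      rcases b with y | j
      · have hyb := mem_polySet_inl.mp hb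
        rw [polyEquiv_val_inl huv.ne, polyEquiv_val_inr huv.ne, pe_adj_inr,
          nbrA_eq_inl, nbrB_eq_inl]
        rcases hyb with hy | hy
        · rw [if_pos hy]
          constructor
          · intro hh; exact Or.inl ⟨hy, by omega⟩
          · rintro (⟨-, hi'⟩ | ⟨hyv, hi'⟩)
            · omega
            · exact absurd (hy.symm.trans hyv) huv.ne
        · rw [if_neg (by rw [hy]; exact Ne.symm huv.ne)]
          constructor
          · intro hh; exact Or.inr ⟨hy, by omega⟩
          · rintro (⟨hyu, hi'⟩ | ⟨-, hi'⟩)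
            · exact absurd (hy.symm.trans hyu) (Ne.symm huv.ne)
            · omega
      · have hj := j.isLt
        rw [polyEquiv_val_inr huv.ne, polyEquiv_val_inr huv.ne, pe_adj_inr,
          nbrA_eq_inr, nbrB_eq_inr]
        omega

lemma polySet_card {u v : V} (huv : u ≠ v) (m : ℕ) : Nat.card (polySet u v m) = m + 2 := by
  rw [Nat.card_congr (polyEquiv u v huv m)]
  simp

lemma pe_polySet_chordless {u v : V} (huv : G.Adj u v) {m : ℕ} (hm : 1 ≤ m) :
    (G.pathExtend u v m).IsChordlessCycle (polySet u v m) := by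
  constructor
  · rw [polySet_card huv.ne]; omega
  · rw [polySet_card huv.ne]; exact ⟨polyIso huv m⟩

lemma two_nbrs_only {s : Set V} (hs : G.IsChordlessCycle s) {x z1 z2 : V} (hx : x ∈ s)
    (h1 : z1 ∈ s) (h2 : z2 ∈ s) (h12 : z1 ≠ z2) (a1 : G.Adj x z1) (a2 : G.Adj x z2) :
    ∀ y ∈ s, G.Adj x y → y = z1 ∨ y = z2 := by
  obtain ⟨y0, z0, -, -, hne, -, -, hmax⟩ := chordless_nbrs hs hx
  intro y hy ha
  have e1 := hmax _ h1 a1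
  have e2 := hmax _ h2 a2
  have e3 := hmax _ hy ha
  rcases e1 with rfl | rfl <;> rcases e2 with rfl | rfl <;> tauto

lemma nbrA_mem_polySet {u v : V} {m : ℕ} (i : Fin m) : nbrA u m i ∈ polySet u v m := by
  unfold nbrA; split_ifs <;> simp [polySet]

lemma nbrB_mem_polySet {u v : V} {m : ℕ} (i : Fin m) : nbrB v m i ∈ polySet u v m := by
  unfold nbrB; split_ifs <;> simp [polySet]

lemma pe_chordless_inr {u v : V} (huv : G.Adj u v) {m : ℕ} (hm : 1 ≤ m)
    {s : Set (V ⊕ Fin m)} (hs : (G.pathExtend u v m).IsChordlessCycle s)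
    {i0 : Fin m} (hi0 : Sum.inr i0 ∈ s) : s = polySet u v m := by
  have h0m : (0 : ℕ) < m := hm
  have nbr_in : ∀ i : Fin m, Sum.inr i ∈ s → nbrA u m i ∈ s ∧ nbrB v m i ∈ s := by
    intro i hi
    obtain ⟨y, z, hy, hz, hne, hay, haz, -⟩ := chordless_nbrs hs hi
    have hy' := (pe_adj_inr i y).mp hay
    have hz' := (pe_adj_inr i z).mp haz
    rcases hy' with rfl | rfl <;> rcases hz' with rfl | rfl
    · exact absurd rfl hne
    · exact ⟨hy, hz⟩
    · exact ⟨hz, hy⟩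
    · exact absurd rfl hne
  have down : ∀ n : ℕ, ∀ i : Fin m, i.val = n → Sum.inr i ∈ s →
      ∀ j : Fin m, j.val ≤ i.val → Sum.inr j ∈ s := by
    intro n
    induction n with
    | zero =>
      intro i hival hi j hj
      have : j = i := Fin.ext (by omega)
      rwa [this]
    | succ n ih =>
      intro i hival hi j hj
      rcases Nat.eq_or_lt_of_le hj with heq | hlt
      · rwa [Fin.ext heq]
      · have step := (nbr_in i hi).1
        rw [nbrA, if_neg (by omega)] at step
        exact ih ⟨i.val - 1, by have := i.isLt; omega⟩ (by simp; omega) step j (by simp; omega)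
  have up : ∀ n : ℕ, ∀ i : Fin m, m - 1 - i.val = n → Sum.inr i ∈ s →
      ∀ j : Fin m, i.val ≤ j.val → Sum.inr j ∈ s := by
    intro n
    induction n with
    | zero =>
      intro i hival hi j hj
      have : j = i := Fin.ext (by have := j.isLt; have := i.isLt; omega)
      rwa [this]
    | succ n ih =>
      intro i hival hi j hj
      rcases Nat.eq_or_lt_of_le hj with heq | hlt
      · rwa [(Fin.ext heq.symm : j = i)]
      · have step := (nbr_in i hi).2
        rw [nbrB, dif_neg (by have := i.isLt; omega)] at step
        exact ih ⟨i.val + 1, by have := j.isLt; omega⟩ (by simp; omega) step j (by simp; omega)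
  have all_inr : ∀ j : Fin m, Sum.inr j ∈ s := by
    intro j
    rcases le_total j.val i0.val with h | h
    · exact down i0.val i0 rfl hi0 j h
    · exact up (m - 1 - i0.val) i0 rfl hi0 j h
  have hu : Sum.inl u ∈ s := by
    have := (nbr_in ⟨0, h0m⟩ (all_inr _)).1
    rwa [nbrA, if_pos rfl] at this
  have hv : Sum.inl v ∈ s := by
    have := (nbr_in ⟨m - 1, by omega⟩ (all_inr _)).2
    rwa [nbrB, dif_pos rfl] at this
  have adju0 : (G.pathExtend u v m).Adj (Sum.inl u) (Sum.inr (⟨0, h0m⟩ : Fin m)) :=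
    ((pe_adj_inr _ _).mpr (Or.inl ((nbrA_eq_inl _).mpr ⟨rfl, rfl⟩))).symm
  have adjvlast : (G.pathExtend u v m).Adj (Sum.inl v) (Sum.inr (⟨m - 1, by omega⟩ : Fin m)) :=
    ((pe_adj_inr _ _).mpr (Or.inr ((nbrB_eq_inl _).mpr ⟨rfl, rfl⟩))).symm
  have adjuv : (G.pathExtend u v m).Adj (Sum.inl u) (Sum.inl v) := pe_adj_inl_inl.mpr huv
  have subset1 : s ⊆ polySet u v m := by
    refine chordless_closure hs hi0 (mem_polySet_inr i0) ?_
    intro x hxP hxs y hys hadj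
    rcases x with w | i
    · rcases mem_polySet_inl.mp hxP with h | h
      · obtain rfl := h.symm
        rcases two_nbrs_only hs hxs (all_inr ⟨0, h0m⟩) hv (by simp) adju0 adjuv y hys hadj
          with rfl | rfl
        · exact mem_polySet_inr _
        · exact mem_polySet_inl.mpr (Or.inr rfl)
      · obtain rfl := h.symm
        rcases two_nbrs_only hs hxs (all_inr ⟨m - 1, by omega⟩) hu (by simp) adjvlast adjuv.symm
          y hys hadj with rfl | rfl
        · exact mem_polySet_inr _
        · exact mem_polySet_inl.mpr (Or.inl rfl)
    · rcases (pe_adj_inr i y).mp hadj with rfl | rfl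
      · exact nbrA_mem_polySet i
      · exact nbrB_mem_polySet i
  refine subset1.antisymm ?_
  rintro x hx
  rcases x with w | i
  · rcases mem_polySet_inl.mp hx with h | h
    · rw [h]; exact hu
    · rw [h]; exact hv
  · exact all_inr i

lemma chordless_univ {k : ℕ} (hk : 3 ≤ k) (f : G ≃g cycleGraph k) :
    G.IsChordlessCycle Set.univ := by
  have hcard : Nat.card (Set.univ : Set V) = k := by
    rw [Nat.card_congr (Equiv.Set.univ V), Nat.card_congr f.toEquiv, Nat.card_eq_fintype_card,
      Fintype.card_fin]
  refine ⟨by omega, ⟨?_⟩⟩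
  rw [hcard]
  exact (induceUnivIso G).trans f

def inlEmb (G : SimpleGraph V) (u v : V) (m : ℕ) : G ↪g G.pathExtend u v m where
  toFun := Sum.inl
  inj' := Sum.inl_injective
  map_rel_iff' := pe_adj_inl_inl

lemma p2t_edge_cycle {V : Type} {G : SimpleGraph V} (h : G.IsPolygonal2Tree) :
    ∀ x y : V, G.Adj x y → ∃ s : Set V, G.IsChordlessCycle s ∧ x ∈ s ∧ y ∈ s := by
  induction h with
  | @cycle V G k hk iso =>
    obtain ⟨f⟩ := iso
    exact fun x y _ => ⟨Set.univ, chordless_univ hk f, trivial, trivial⟩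
  | @extend V G u v huv m hm W H iso hG ih =>
    obtain ⟨f⟩ := iso
    intro x y hxy
    have hK : (G.pathExtend u v m).Adj (f x) (f y) := f.map_adj_iff.mpr hxy
    have claim : ∀ a b : V ⊕ Fin m, (G.pathExtend u v m).Adj a b →
        (∃ i : Fin m, b = Sum.inr i) → a ∈ polySet u v m ∧ b ∈ polySet u v m := by
      rintro a b hab ⟨i, rfl⟩
      refine ⟨?_, mem_polySet_inr i⟩
      rcases (pe_adj_inr i a).mp hab.symm with rfl | rfl
      · exact nbrA_mem_polySet i
      · exact nbrB_mem_polySet i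
    have poly_case : f x ∈ polySet u v m → f y ∈ polySet u v m →
        ∃ s : Set W, H.IsChordlessCycle s ∧ x ∈ s ∧ y ∈ s := by
      intro h1 h2
      refine ⟨f.symm '' polySet u v m,
        IsChordlessCycle.map f.symm.toEmbedding (pe_polySet_chordless huv hm), ⟨f x, h1, ?_⟩,
        ⟨f y, h2, ?_⟩⟩ <;> simp
    rcases hfx : f x with a | i
    · rcases hfy : f y with b | j
      · rw [hfx, hfy, pe_adj_inl_inl] at hK
        obtain ⟨s, hs, has, hbs⟩ := ih a b hK
        refine ⟨f.symm '' (Sum.inl '' s),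
          IsChordlessCycle.map f.symm.toEmbedding (IsChordlessCycle.map (inlEmb G u v m) hs), ?_, ?_⟩
        · exact ⟨Sum.inl a, ⟨a, has, rfl⟩, by rw [← hfx]; simp⟩
        · exact ⟨Sum.inl b, ⟨b, hbs, rfl⟩, by rw [← hfy]; simp⟩
      · rw [hfx, hfy] at hK
        obtain ⟨h1, h2⟩ := claim _ _ hK ⟨j, rfl⟩
        exact poly_case (hfx ▸ h1) (hfy ▸ h2)
    · rw [hfx] at hK
      obtain ⟨h2, h1⟩ := claim _ _ hK.symm ⟨i, rfl⟩
      exact poly_case (hfx ▸ h1) h2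

theorem polygonal2Tree_exists_leaf_polygon' {V : Type} (G : SimpleGraph V)
    (h : G.IsPolygonal2Tree)
    (h2 : ∃ s t : Set V, G.IsChordlessCycle s ∧ G.IsChordlessCycle t ∧ s ≠ t) :
    ∃ P : Set V, G.IsChordlessCycle P ∧
      ∃! e : Sym2 V, (e ∈ G.edgeSet ∧ ∀ x ∈ e, x ∈ P) ∧
        ∃ Q : Set V, G.IsChordlessCycle Q ∧ Q ≠ P ∧ ∀ x ∈ e, x ∈ Q := by
  induction h with
  | @cycle V G k hk iso =>
    exfalso
    obtain ⟨f⟩ := iso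
    obtain ⟨s, t, hs, ht, hst⟩ := h2
    have hsu := cyc_chordless_eq_univ hk (IsChordlessCycle.map f.toEmbedding hs)
    have htu := cyc_chordless_eq_univ hk (IsChordlessCycle.map f.toEmbedding ht)
    exact hst (Set.image_injective.mpr f.toEquiv.injective (hsu.trans htu.symm))
  | @extend V G u v huv m hm W H iso hp ih =>
    clear ih h2
    obtain ⟨f⟩ := iso
    have h0m : (0 : ℕ) < m := hm
    have fimg : ∀ A : Set (V ⊕ Fin m), ⇑f '' (⇑f.symm '' A) = A := fun A =>
      f.toEquiv.image_symm_image A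
    have fimg' : ∀ A : Set W, ⇑f.symm '' (⇑f '' A) = A := fun A =>
      f.toEquiv.symm_image_image A
    set P : Set W := ⇑f.symm '' polySet u v m with hPdef
    have hP : H.IsChordlessCycle P :=
      IsChordlessCycle.map f.symm.toEmbedding (pe_polySet_chordless huv hm)
    refine ⟨P, hP, s(f.symm (Sum.inl u), f.symm (Sum.inl v)), ⟨⟨?_, ?_⟩, ?_⟩, ?_⟩
    · exact f.symm.map_adj_iff.mpr (pe_adj_inl_inl.mpr huv)
    · intro x hx
      rw [Sym2.mem_iff] at hx
      rcases hx with rfl | rfl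
      · exact ⟨Sum.inl u, mem_polySet_inl.mpr (Or.inl rfl), rfl⟩
      · exact ⟨Sum.inl v, mem_polySet_inl.mpr (Or.inr rfl), rfl⟩
    · obtain ⟨s, hs, hus, hvs⟩ := p2t_edge_cycle hp u v huv
      refine ⟨⇑f.symm '' (Sum.inl '' s),
        IsChordlessCycle.map f.symm.toEmbedding (IsChordlessCycle.map (inlEmb G u v m) hs),
        ?_, ?_⟩
      · intro hQP
        have himg := congrArg (Set.image ⇑f) hQP
        rw [fimg, fimg] at himg
        have hmem : Sum.inr (⟨0, h0m⟩ : Fin m) ∈ Sum.inl '' s := himg ▸ mem_polySet_inr _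
        obtain ⟨z, -, hz⟩ := hmem
        exact nomatch hz
      · intro x hx
        rw [Sym2.mem_iff] at hx
        rcases hx with rfl | rfl
        · exact ⟨Sum.inl u, ⟨u, hus, rfl⟩, rfl⟩
        · exact ⟨Sum.inl v, ⟨v, hvs, rfl⟩, rfl⟩
    · intro e' he'
      induction e' using Sym2.ind with
      | _ x y =>
        obtain ⟨⟨he'E, he'P⟩, Q', hQ', hQ'ne, he'Q'⟩ := he'
        have hxy : H.Adj x y := he'E
        have hfmem : ∀ z, z ∈ P → f z ∈ polySet u v m := by
          rintro z ⟨a, ha, rfl⟩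
          simpa using ha
        have hfx := hfmem x (he'P x (Sym2.mem_mk_left x y))
        have hfy := hfmem y (he'P y (Sym2.mem_mk_right x y))
        have hQ'img : (G.pathExtend u v m).IsChordlessCycle (⇑f '' Q') :=
          IsChordlessCycle.map f.toEmbedding hQ'
        have hQ'img_ne : ⇑f '' Q' ≠ polySet u v m := by
          intro hph
          exact hQ'ne (by rw [← fimg' Q', hph])
        have no_inr : ∀ z, z ∈ Q' → ∀ i : Fin m, f z ≠ Sum.inr i := by
          intro z hz i hzi
          exact hQ'img_ne (pe_chordless_inr huv hm hQ'img ⟨z, hz, hzi⟩)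
        have getl : ∀ z, z ∈ Q' → f z ∈ polySet u v m →
            (f z = Sum.inl u ∨ f z = Sum.inl v) := by
          intro z hz hzp
          rcases hfz : f z with a | i
          · rcases mem_polySet_inl.mp (hfz ▸ hzp) with h | h
            · exact Or.inl (by rw [h])
            · exact Or.inr (by rw [h])
          · exact absurd hfz (no_inr z hz i)
        have hxQ' := he'Q' x (Sym2.mem_mk_left x y)
        have hyQ' := he'Q' y (Sym2.mem_mk_right x y)
        have hx' := getl x hxQ' hfx
        have hy' := getl y hyQ' hfy
        have hxe : ∀ (z : W) (a : V ⊕ Fin m), f z = a → z = f.symm a := by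
          intro z a ha; rw [← ha]; simp
        rcases hx' with hx' | hx' <;> rcases hy' with hy' | hy'
        · exact absurd (f.injective (hx'.trans hy'.symm)) hxy.ne
        · rw [hxe _ _ hx', hxe _ _ hy']
        · rw [Sym2.eq_swap, hxe _ _ hx', hxe _ _ hy']
        · exact absurd (f.injective (hx'.trans hy'.symm)) hxy.ne

end AuxLeafPolygon

/-- A polygonal 2-tree with at least two chordless cycles has a leaf polygon: a
chordless cycle `P` such that exactly one edge of `P` is also an edge of some other
chordless cycle. -/
theorem polygonal2Tree_exists_leaf_polygon {V : Type} (G : SimpleGraph V)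
    (h : G.IsPolygonal2Tree)
    (h2 : ∃ s t : Set V, G.IsChordlessCycle s ∧ G.IsChordlessCycle t ∧ s ≠ t) :
    ∃ P : Set V, G.IsChordlessCycle P ∧
      ∃! e : Sym2 V, (e ∈ G.edgeSet ∧ ∀ x ∈ e, x ∈ P) ∧
        ∃ Q : Set V, G.IsChordlessCycle Q ∧ Q ≠ P ∧ ∀ x ∈ e, x ∈ Q :=
  polygonal2Tree_exists_leaf_polygon' G h h2
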